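/- Let G be the amalgamated product defined in the context. Then the abelianization G/[G,G] is infinite cyclic, and the element u does not lie in the commutator subgroup [G,G]. -/

import Mathlib

/-- A group is Obraztsov if it is 2-generated, simple, complete (trivial center and all
automorphisms inner), torsion-free, and every nontrivial proper subgroup is infinite cyclic. -/
def IsObraztsov (G : Type*) [Group G] : Prop :=
  (∃ a b : G, Subgroup.closure {a, b} = ⊤) ∧
  IsSimpleGroup G ∧
  Subgroup.center G = ⊥ ∧
  (∀ φ : G ≃* G, ∃ g : G, ∀ y : G, φ y = g * y * g⁻¹) ∧
  (∀ g : G, g ≠ 1 → ¬IsOfFinOrder g) ∧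
  (∀ K : Subgroup G, K ≠ ⊥ → K ≠ ⊤ → IsCyclic K ∧ Infinite K)

/-- `h` generates a maximal cyclic subgroup. -/
def IsMaxCyclicGen {H : Type*} [Group H] (h : H) : Prop :=
  ∀ w : H, Subgroup.zpowers h ≤ Subgroup.zpowers w →
    Subgroup.zpowers h = Subgroup.zpowers w

/-- `u i = (h i, 1) ∈ H i × ℤ`. -/
def amalgU {H : Bool → Type*} [∀ i, Group (H i)] (h : ∀ i, H i) (i : Bool) :
    H i × Multiplicative ℤ :=
  (h i, Multiplicative.ofAdd (1 : ℤ))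

/-- The homomorphism `ℤ → H i × ℤ` sending `1 ↦ u i`. -/
def amalgMap {H : Bool → Type*} [∀ i, Group (H i)] (h : ∀ i, H i) (i : Bool) :
    Multiplicative ℤ →* H i × Multiplicative ℤ :=
  zpowersHom _ (amalgU h i)

/-- The amalgamated free product `G = (H₁ × ℤ) ∗_{u₁ = u₂} (H₂ × ℤ)`. -/
abbrev Amalg (H : Bool → Type*) [∀ i, Group (H i)] (h : ∀ i, H i) : Type _ :=
  Monoid.PushoutI (amalgMap h)

section Aux

lemma obr_perfect {G : Type*} [Group G] (hG : IsObraztsov G) : commutator G = ⊤ := by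
  obtain ⟨-, hs, hc, -⟩ := hG
  haveI := hs
  rcases Subgroup.Normal.eq_bot_or_eq_top (inferInstance : (commutator G).Normal) with hbot | htop
  · exfalso
    have hcomm : ∀ a b : G, a * b = b * a := by
      intro a b
      open scoped commutatorElement in
      have : ⁅a, b⁆ ∈ commutator G := Subgroup.commutator_mem_commutator trivial trivial
      rw [hbot, Subgroup.mem_bot] at this
      exact commutatorElement_eq_one_iff_mul_comm.mp this
    have hct : Subgroup.center G = ⊤ := by
      rw [eq_top_iff]
      intro x _
      rw [Subgroup.mem_center_iff]
      exact fun g => hcomm g x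
    rw [hc] at hct
    obtain ⟨a, b, hab⟩ := exists_pair_ne G
    apply hab
    have ha : a ∈ (⊥ : Subgroup G) := hct ▸ Subgroup.mem_top a
    have hb : b ∈ (⊥ : Subgroup G) := hct ▸ Subgroup.mem_top b
    rw [Subgroup.mem_bot] at ha hb
    rw [ha, hb]
  · exact htop

lemma obr_hom_trivial {G A : Type*} [Group G] [CommGroup A] (hG : IsObraztsov G)
    (f : G →* A) (g : G) : f g = 1 := by
  have h1 : commutator G ≤ f.ker := Abelianization.commutator_subset_ker f
  rw [obr_perfect hG] at h1
  exact h1 (Subgroup.mem_top g)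

end Aux

/-- For the amalgam `G` of two Obraztsov groups crossed with `ℤ`, amalgamated along
`u₁ = u₂` where `u i = (h i, 1)` with `h i` generating a maximal cyclic subgroup, the
abelianization of `G` is infinite cyclic and `u ∉ [G,G]`. -/
theorem stmt_16 (H : Bool → Type*) [∀ i, Group (H i)]
    (hObr : ∀ i, IsObraztsov (H i))
    (h : ∀ i, H i) (hmax : ∀ i, IsMaxCyclicGen (h i)) :
    IsCyclic (Abelianization (Amalg H h)) ∧
    Infinite (Abelianization (Amalg H h)) ∧
    Monoid.PushoutI.of (φ := amalgMap h) true (amalgU h true) ∉ commutator (Amalg H h) := by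
  classical
  set u : Amalg H h := Monoid.PushoutI.of (φ := amalgMap h) true (amalgU h true) with hu
  -- each `of i (amalgU h i)` equals `base (ofAdd 1)`
  have hbase : ∀ i, Monoid.PushoutI.of (φ := amalgMap h) i (amalgU h i)
      = Monoid.PushoutI.base (amalgMap h) (Multiplicative.ofAdd (1 : ℤ)) := by
    intro i
    rw [← Monoid.PushoutI.of_apply_eq_base (φ := amalgMap h) i]
    congr 1
    simp [amalgMap]
  -- the homomorphism to ℤ
  have hcompat : ∀ i, (MonoidHom.snd (H i) (Multiplicative ℤ)).comp (amalgMap h i)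
      = MonoidHom.id (Multiplicative ℤ) := by
    intro i
    ext
    simp [amalgMap, amalgU]
  set f : Amalg H h →* Multiplicative ℤ :=
    Monoid.PushoutI.lift (fun i => MonoidHom.snd (H i) (Multiplicative ℤ))
      (MonoidHom.id _) hcompat with hf
  have hfu : f u = Multiplicative.ofAdd (1 : ℤ) := by
    rw [hu, hf]
    rw [Monoid.PushoutI.lift_of]
    rfl
  -- abelianization generated by image of u
  have hgen : ∀ g : Amalg H h,
      Abelianization.of g ∈ Subgroup.zpowers (Abelianization.of u) := by
    intro g
    induction g using Monoid.PushoutI.induction_on with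
    | of i g =>
      obtain ⟨a, n⟩ := g
      have hdec : (a, n) = ((MonoidHom.inl (H i) (Multiplicative ℤ))
            (a * (h i) ^ (-(n.toAdd)))) * (amalgU h i) ^ (n.toAdd) := by
        simp [amalgU, Prod.ext_iff, Prod.pow_def, mul_assoc, ← ofAdd_zsmul]
      rw [hdec, map_mul, map_mul, map_zpow, map_zpow]
      have h1 : Abelianization.of (Monoid.PushoutI.of (φ := amalgMap h) i
          ((MonoidHom.inl (H i) (Multiplicative ℤ)) (a * (h i) ^ (-(n.toAdd))))) = 1 := by
        exact obr_hom_trivial (hObr i)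
          ((Abelianization.of).comp ((Monoid.PushoutI.of (φ := amalgMap h) i).comp
            (MonoidHom.inl (H i) (Multiplicative ℤ)))) _
      rw [h1, one_mul, hbase i, ← hbase true, ← hu]
      exact Subgroup.zpow_mem _ (Subgroup.mem_zpowers _) _
    | base m =>
      have : Monoid.PushoutI.base (amalgMap h) m
          = Monoid.PushoutI.of (φ := amalgMap h) true ((amalgU h true) ^ (m.toAdd)) := by
        rw [← Monoid.PushoutI.of_apply_eq_base (φ := amalgMap h) true]
        rfl
      rw [this, map_zpow, map_zpow, ← hu]
      exact Subgroup.zpow_mem _ (Subgroup.mem_zpowers _) _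
    | mul x y hx hy =>
      rw [map_mul]
      exact Subgroup.mul_mem _ hx hy
  have hsurj : Function.Surjective (Abelianization.of (G := Amalg H h)) :=
    QuotientGroup.mk'_surjective (commutator (Amalg H h))
  have hgen' : ∀ x : Abelianization (Amalg H h),
      x ∈ Subgroup.zpowers (Abelianization.of u) := by
    intro x
    obtain ⟨g, rfl⟩ := hsurj x
    exact hgen g
  refine ⟨⟨⟨Abelianization.of u, hgen'⟩⟩, ?_, ?_⟩
  · -- infinite
    set fbar := Abelianization.lift f with hfbar
    refine Infinite.of_injective (fun z : ℤ => Abelianization.of u ^ z) ?_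
    intro a b hab
    have := congrArg fbar hab
    simp only [map_zpow, hfbar, Abelianization.lift_apply_of, hfu] at this
    have : (a : ℤ) • (1 : ℤ) = b • (1 : ℤ) := by
      have h2 := congrArg Multiplicative.toAdd this
      simpa using h2
    simpa using this
  · intro hmem
    have : f u = 1 := Abelianization.commutator_subset_ker f hmem
    rw [hfu] at this
    have h2 := congrArg Multiplicative.toAdd this
    simp at h2
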